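/- If α is a continuous gauge norm on L^∞(X,μ) (where μ is a nonatomic probability measure) that is rotation-symmetric on the circle, i.e. α(f_θ) = α(f) for all θ where f_θ(z) = f(e^{iθ}z), then α is dominating: ‖f‖₁ ≤ α(f) for all f ∈ L^∞(𝕋, m). -/

import Mathlib

/- STATEMENT 0: If α is a continuous gauge norm on L^∞(𝕋, m) (m normalized Lebesgue/Haar
measure on the circle, a nonatomic probability measure) which is rotation-symmetric,
then α is dominating: ‖f‖₁ ≤ α(f) for all f ∈ L^∞(𝕋, m). -/

open MeasureTheory

noncomputable section

instance : Fact (0 < 2 * Real.pi) := ⟨by positivity⟩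

/-- The circle, modeled as `ℝ / 2πℤ`. -/
abbrev Circle𝕋 := AddCircle (2 * Real.pi)

/-- Normalized Lebesgue (Haar) measure on the circle: a probability measure. -/
abbrev circleHaar : Measure Circle𝕋 := AddCircle.haarAddCircle

/-- `α` is a gauge norm on `L^∞(X, μ)`: a norm on (a.e. classes of) essentially bounded
functions with `α 1 = 1` and `α |f| = α f`. -/
structure IsGaugeNorm {X : Type*} [MeasurableSpace X] (μ : Measure X)
    (α : (X → ℂ) → ℝ) : Prop where
  congr_ae : ∀ f g : X → ℂ, f =ᵐ[μ] g → α f = α g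
  nonneg : ∀ f : X → ℂ, 0 ≤ α f
  eq_zero : ∀ f : X → ℂ, MemLp f ⊤ μ → α f = 0 → f =ᵐ[μ] 0
  add_le : ∀ f g : X → ℂ, MemLp f ⊤ μ → MemLp g ⊤ μ → α (f + g) ≤ α f + α g
  smul_eq : ∀ (c : ℂ) (f : X → ℂ), α (c • f) = ‖c‖ * α f
  norm_one : α 1 = 1
  gauge : ∀ f : X → ℂ, α (fun x => (‖f x‖ : ℂ)) = α f

/-- `α` is continuous: `α(χ_E) → 0` as `μ E → 0`. -/
def IsContinuousGauge {X : Type*} [MeasurableSpace X] (μ : Measure X)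
    (α : (X → ℂ) → ℝ) : Prop :=
  ∀ ε : ℝ, 0 < ε → ∃ δ : ℝ, 0 < δ ∧ ∀ E : Set X, MeasurableSet E →
    μ E < ENNReal.ofReal δ → α (Set.indicator E (fun _ => (1 : ℂ))) < ε

namespace GaugeAux

variable {X : Type*} [MeasurableSpace X] {μ : Measure X} {α : (X → ℂ) → ℝ}

lemma ae_norm_le_toReal {f : X → ℂ} (hf : MemLp f ⊤ μ) :
    ∀ᵐ x ∂μ, ‖f x‖ ≤ (eLpNormEssSup f μ).toReal := by
  have h1 := ae_le_eLpNormEssSup (f := f) (μ := μ)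
  have hfin : eLpNormEssSup f μ ≠ ⊤ := by
    have h2 := hf.2
    rw [eLpNorm_exponent_top] at h2
    exact h2.ne
  filter_upwards [h1] with x hx
  have : ((‖f x‖₊ : ENNReal)).toReal ≤ (eLpNormEssSup f μ).toReal :=
    ENNReal.toReal_mono hfin hx
  simpa using this

/-- A gauge norm is monotone: if `‖f‖ ≤ h` a.e. then `α f ≤ α h`. -/
lemma gauge_mono (hg : IsGaugeNorm μ α) {f : X → ℂ} {h : X → ℝ}
    (hf : MemLp f ⊤ μ) (hh : MemLp (fun x => (h x : ℂ)) ⊤ μ)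
    (hle : ∀ᵐ x ∂μ, ‖f x‖ ≤ h x) :
    α f ≤ α (fun x => (h x : ℂ)) := by
  set C : ℝ := (eLpNormEssSup (fun x => (h x : ℂ)) μ).toReal with hC
  have hCae : ∀ᵐ x ∂μ, |h x| ≤ C := by
    filter_upwards [ae_norm_le_toReal hh] with x hx
    simpa [Complex.norm_real] using hx
  set t : X → ℝ := fun x => Real.sqrt (h x * h x - ‖f x‖ * ‖f x‖) with ht
  set F : X → ℂ := fun x => (‖f x‖ : ℂ) with hF
  set G : X → ℂ := fun x => Complex.I * (t x : ℂ) with hG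
  -- measurability
  have hfm : AEStronglyMeasurable f μ := hf.aestronglyMeasurable
  have hhm : AEMeasurable h μ := by
    have h1 : AEMeasurable (fun x => (h x : ℂ)) μ := hh.aestronglyMeasurable.aemeasurable
    have h2 : AEMeasurable (fun x => ((h x : ℂ)).re) μ :=
      Complex.measurable_re.comp_aemeasurable h1
    simpa using h2
  have hfn : AEMeasurable (fun x => ‖f x‖) μ := hfm.norm.aemeasurable
  have htm : AEMeasurable t μ :=
    Real.continuous_sqrt.measurable.comp_aemeasurable ((hhm.mul hhm).sub (hfn.mul hfn))
  have hFm : AEStronglyMeasurable F μ :=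
    (Complex.measurable_ofReal.comp_aemeasurable hfn).aestronglyMeasurable
  have hGm : AEStronglyMeasurable G μ :=
    ((Complex.measurable_ofReal.comp_aemeasurable htm).aestronglyMeasurable).const_mul _
  -- pointwise a.e. facts
  have hkey : ∀ᵐ x ∂μ, ‖F x + G x‖ = h x ∧ ‖F x - G x‖ = h x := by
    filter_upwards [hle] with x hx
    have h0 : 0 ≤ h x := le_trans (norm_nonneg _) hx
    have hnn : 0 ≤ h x * h x - ‖f x‖ * ‖f x‖ := by
      have := mul_self_le_mul_self (norm_nonneg (f x)) hx
      linarith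
    have ht2 : t x * t x = h x * h x - ‖f x‖ * ‖f x‖ := Real.mul_self_sqrt hnn
    have hre : ∀ s : ℝ, ‖(‖f x‖ : ℂ) + Complex.I * (s : ℂ)‖
        = Real.sqrt (‖f x‖ * ‖f x‖ + s * s) := by
      intro s
      rw [Complex.norm_def, Complex.normSq_apply]
      simp [mul_comm]
    constructor
    · have := hre (t x)
      rw [hF, hG]
      simp only []
      rw [this, ht2]
      have : ‖f x‖ * ‖f x‖ + (h x * h x - ‖f x‖ * ‖f x‖) = h x * h x := by ring
      rw [this, Real.sqrt_mul_self h0]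
    · have hneg : F x - G x = (‖f x‖ : ℂ) + Complex.I * ((-(t x) : ℝ) : ℂ) := by
        rw [hF, hG]; push_cast; ring
      rw [hneg, hre (-(t x))]
      have : ‖f x‖ * ‖f x‖ + (-(t x)) * (-(t x)) = h x * h x := by
        rw [neg_mul_neg, ht2]; ring
      rw [this, Real.sqrt_mul_self h0]
  -- Memℒp of F ± G
  have hmemFG : MemLp (F + G) ⊤ μ := by
    apply memLp_top_of_bound (hFm.add hGm) C
    filter_upwards [hkey, hCae] with x hx hc
    rw [Pi.add_apply, hx.1]
    exact (le_abs_self _).trans hc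
  have hmemFG' : MemLp (F - G) ⊤ μ := by
    apply memLp_top_of_bound (hFm.sub hGm) C
    filter_upwards [hkey, hCae] with x hx hc
    rw [Pi.sub_apply, hx.2]
    exact (le_abs_self _).trans hc
  -- α of F ± G equals α h
  have hαFG : α (F + G) = α (fun x => (h x : ℂ)) := by
    rw [← hg.gauge (F + G)]
    apply hg.congr_ae
    filter_upwards [hkey] with x hx
    rw [Pi.add_apply, hx.1]
  have hαFG' : α (F - G) = α (fun x => (h x : ℂ)) := by
    rw [← hg.gauge (F - G)]
    apply hg.congr_ae
    filter_upwards [hkey] with x hx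
    rw [Pi.sub_apply, hx.2]
  -- combine
  have hsplit : F = (1/2 : ℂ) • (F + G) + (1/2 : ℂ) • (F - G) := by
    funext x; simp only [Pi.add_apply, Pi.smul_apply, Pi.sub_apply, smul_eq_mul]; ring
  calc α f = α F := (hg.gauge f).symm
    _ = α ((1/2 : ℂ) • (F + G) + (1/2 : ℂ) • (F - G)) := by rw [← hsplit]
    _ ≤ α ((1/2 : ℂ) • (F + G)) + α ((1/2 : ℂ) • (F - G)) :=
        hg.add_le _ _ (hmemFG.const_smul _) (hmemFG'.const_smul _)
    _ = (1/2) * α (F + G) + (1/2) * α (F - G) := by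
        rw [hg.smul_eq, hg.smul_eq]; norm_num
    _ = α (fun x => (h x : ℂ)) := by rw [hαFG, hαFG']; ring

/-- A gauge norm of a nonnegative real constant. -/
lemma gauge_const (hg : IsGaugeNorm μ α) {r : ℝ} (hr : 0 ≤ r) :
    α (fun _ => (r : ℂ)) = r := by
  have h1 : (fun _ : X => (r : ℂ)) = (r : ℂ) • (1 : X → ℂ) := by
    funext x; simp
  rw [h1, hg.smul_eq, hg.norm_one, Complex.norm_real, Real.norm_eq_abs,
    abs_of_nonneg hr, mul_one]

end GaugeAux

namespace CircAux

lemma integrable_of_bound {X : Type*} [MeasurableSpace X] {μ : Measure X}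
    [IsFiniteMeasure μ] {g : X → ℝ} (hgm : Measurable g) {B : ℝ}
    (hb : ∀ x, |g x| ≤ B) : Integrable g μ :=
  (memLp_top_of_bound hgm.aestronglyMeasurable B
    (Filter.Eventually.of_forall fun x => by simpa [Real.norm_eq_abs] using hb x)).integrable
    le_top

/-- There is a rotation `θ` such that averaging `g` with its rotate by `θ`
at least halves the variance. -/
lemma exists_halving_rotation {g : Circle𝕋 → ℝ} {M : ℝ} (hgm : Measurable g)
    (hb : ∀ x, |g x| ≤ M) {c : ℝ} (hc : ∫ x, g x ∂circleHaar = c) :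
    ∃ θ : Circle𝕋, ∫ x, ((g x + g (θ + x)) / 2 - c) ^ 2 ∂circleHaar
      ≤ (∫ x, (g x - c) ^ 2 ∂circleHaar) / 2 := by
  set μ := circleHaar with hμ
  set u : Circle𝕋 → ℝ := fun x => g x - c with hu
  have hum : Measurable u := hgm.sub measurable_const
  set B : ℝ := M + |c| with hB
  have hub : ∀ x, |u x| ≤ B := fun x =>
    (abs_sub (g x) c).trans (add_le_add_left (hb x) _)
  have hu_int : Integrable u μ := integrable_of_bound hum hub
  have hu0 : ∫ x, u x ∂μ = 0 := by
    rw [hu]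
    rw [integral_sub (integrable_of_bound hgm hb) (integrable_const c)]
    simp [hc]
  have hu2_int : Integrable (fun x => u x ^ 2) μ := by
    apply integrable_of_bound (hum.pow_const 2)
    intro x
    calc |u x ^ 2| = |u x| * |u x| := by rw [sq, abs_mul]
      _ ≤ B * B := mul_le_mul (hub x) (hub x) (abs_nonneg _) ((abs_nonneg _).trans (hub x))
  set V : ℝ := ∫ x, u x ^ 2 ∂μ with hV
  have humθ : ∀ θ : Circle𝕋, Measurable (fun x => u (θ + x)) := fun θ =>
    hum.comp (measurable_const_add θ)
  have hcross_int : ∀ θ : Circle𝕋, Integrable (fun x => u x * u (θ + x)) μ := by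
    intro θ
    apply integrable_of_bound (hum.mul (humθ θ)) (B := B * B)
    intro x
    rw [Pi.mul_apply, abs_mul]
    exact mul_le_mul (hub x) (hub _) (abs_nonneg _) ((abs_nonneg _).trans (hub x))
  have hsq2_int : ∀ θ : Circle𝕋, Integrable (fun x => u (θ + x) ^ 2) μ := by
    intro θ
    apply integrable_of_bound ((humθ θ).pow_const 2) (B := B * B)
    intro x
    calc |u (θ + x) ^ 2| = |u (θ+x)| * |u (θ+x)| := by rw [sq, abs_mul]
      _ ≤ B * B := mul_le_mul (hub (θ+x)) (hub (θ+x)) (abs_nonneg _)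
          ((abs_nonneg _).trans (hub (θ+x)))
  set w : Circle𝕋 → ℝ := fun θ => ∫ x, u x * u (θ + x) ∂μ with hw
  have hinner : ∀ θ : Circle𝕋,
      ∫ x, ((u x + u (θ + x)) / 2) ^ 2 ∂μ = V / 2 + w θ / 2 := by
    intro θ
    have e1 : (fun x => ((u x + u (θ + x)) / 2) ^ 2)
        = fun x => (u x ^ 2 / 4 + u x * u (θ + x) / 2) + u (θ + x) ^ 2 / 4 := by
      funext x; ring
    have i1 : Integrable (fun x => u x ^ 2 / 4) μ := hu2_int.div_const 4
    have i2 : Integrable (fun x => u x * u (θ + x) / 2) μ := (hcross_int θ).div_const 2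
    have i3 : Integrable (fun x => u (θ + x) ^ 2 / 4) μ := (hsq2_int θ).div_const 4
    have i12 : Integrable (fun x => u x ^ 2 / 4 + u x * u (θ + x) / 2) μ := i1.add i2
    rw [e1, integral_add i12 i3, integral_add i1 i2]
    have h2 : ∫ x, u (θ + x) ^ 2 ∂μ = V := by
      rw [hV]; exact integral_add_left_eq_self (fun x => u x ^ 2) θ
    rw [integral_div, integral_div, integral_div, h2, ← hV]
    have hwθ : w θ = ∫ a, u a * u (θ + a) ∂μ := rfl
    rw [hwθ]
    ring
  have hprod_int : Integrable (Function.uncurry fun θ x => u x * u (θ + x)) (μ.prod μ) := by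
    have hm : Measurable (Function.uncurry fun θ x : Circle𝕋 => u x * u (θ + x)) :=
      (hum.comp measurable_snd).mul (hum.comp (measurable_fst.add measurable_snd))
    apply integrable_of_bound hm (B := B * B)
    rintro ⟨θ, x⟩
    rw [Function.uncurry_apply_pair, abs_mul]
    exact mul_le_mul (hub x) (hub _) (abs_nonneg _) ((abs_nonneg _).trans (hub x))
  have hw0 : ∫ θ, w θ ∂μ = 0 := by
    have hswap := integral_integral_swap hprod_int
    have hin : ∀ x : Circle𝕋, ∫ θ, u x * u (θ + x) ∂μ = 0 := by
      intro x
      rw [integral_const_mul, integral_add_right_eq_self u x, hu0, mul_zero]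
    rw [hw]
    calc ∫ θ, ∫ x, u x * u (θ + x) ∂μ ∂μ = ∫ x, ∫ θ, u x * u (θ + x) ∂μ ∂μ := hswap
      _ = ∫ x : Circle𝕋, (0:ℝ) ∂μ := by simp_rw [hin]
      _ = 0 := integral_zero _ _
  have hw_int : Integrable w μ := hprod_int.integral_prod_left
  have hex : ∃ θ, w θ ≤ 0 := by
    by_contra hcon
    push_neg at hcon
    have hnn : 0 ≤ w := fun θ => (hcon θ).le
    haveI : (MeasureTheory.ae μ).NeBot := ae_neBot.2 (IsProbabilityMeasure.ne_zero μ)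
    have hz := (integral_eq_zero_iff_of_nonneg hnn hw_int).mp hw0
    obtain ⟨θ, hθ⟩ := hz.exists
    simp only [Pi.zero_apply] at hθ
    exact absurd hθ (ne_of_gt (hcon θ))
  obtain ⟨θ, hθ⟩ := hex
  refine ⟨θ, ?_⟩
  have e2 : (fun x => ((g x + g (θ + x)) / 2 - c) ^ 2)
      = fun x => ((u x + u (θ + x)) / 2) ^ 2 := by
    funext x; rw [hu]; ring
  rw [e2, hinner θ]
  linarith

end CircAux

/-- Rotation symmetry theorem: a continuous gauge norm on `L^∞` of the circle which is
invariant under rotations is dominating: `‖f‖₁ ≤ α f` for every `f ∈ L^∞(𝕋, m)`. -/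
theorem gauge_norm_rotation_invariant_dominating
    (α : (Circle𝕋 → ℂ) → ℝ)
    (hgauge : IsGaugeNorm circleHaar α)
    (hcont : IsContinuousGauge circleHaar α)
    (hrot : ∀ (θ : Circle𝕋) (f : Circle𝕋 → ℂ), α (fun x => f (θ + x)) = α f) :
    ∀ f : Circle𝕋 → ℂ, MemLp f ⊤ circleHaar →
      ∫ x, ‖f x‖ ∂circleHaar ≤ α f := by
  intro f hf
  classical
  set M : ℝ := (eLpNormEssSup f circleHaar).toReal with hM
  have hM0 : 0 ≤ M := ENNReal.toReal_nonneg
  have hfae : ∀ᵐ x ∂circleHaar, ‖f x‖ ≤ M := GaugeAux.ae_norm_le_toReal hf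
  have hsm := hf.aestronglyMeasurable
  set f₁ : Circle𝕋 → ℂ := hsm.mk f with hf₁def
  have hf₁m : Measurable f₁ := hsm.stronglyMeasurable_mk.measurable
  have hf₁ae : f =ᵐ[circleHaar] f₁ := hsm.ae_eq_mk
  set g₀ : Circle𝕋 → ℝ := fun x => min ‖f₁ x‖ M with hg₀def
  have hg₀nn : ∀ x, 0 ≤ g₀ x := fun x => le_min (norm_nonneg _) hM0
  have hg₀m : Measurable g₀ := hf₁m.norm.min measurable_const
  have hg₀b : ∀ x, |g₀ x| ≤ M := by
    intro x
    rw [abs_of_nonneg (hg₀nn x)]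
    exact min_le_right _ _
  have hg₀ae : g₀ =ᵐ[circleHaar] fun x => ‖f x‖ := by
    filter_upwards [hfae, hf₁ae] with x h1 h2
    simp only [hg₀def, ← h2]
    exact min_eq_left h1
  have hαg₀ : α (fun x => (g₀ x : ℂ)) = α f := by
    have hcoe : (fun x => (g₀ x : ℂ)) =ᵐ[circleHaar] fun x => (‖f x‖ : ℂ) :=
      hg₀ae.mono fun x hx => congrArg Complex.ofReal hx
    rw [hgauge.congr_ae _ _ hcoe, hgauge.gauge f]
  set c : ℝ := ∫ x, g₀ x ∂circleHaar with hcdef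
  have hgoal : ∫ x, ‖f x‖ ∂circleHaar = c := integral_congr_ae hg₀ae.symm
  rw [hgoal]
  have hc0 : 0 ≤ c := integral_nonneg hg₀nn
  -- helper for Memℒp of bounded real functions
  have memTop : ∀ (g : Circle𝕋 → ℝ) (B : ℝ), Measurable g → (∀ x, |g x| ≤ B) →
      MemLp (fun x => (g x : ℂ)) ⊤ circleHaar := by
    intro g B hm hb
    exact memLp_top_of_bound ((Complex.measurable_ofReal.comp hm).aestronglyMeasurable) B
      (Filter.Eventually.of_forall fun x => by simpa [Complex.norm_real] using hb x)
  -- one step: average with a rotation, halving the variance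
  have step : ∀ g : Circle𝕋 → ℝ, Measurable g → (∀ x, |g x| ≤ M) →
      (∫ x, g x ∂circleHaar = c) →
      ∃ g' : Circle𝕋 → ℝ, Measurable g' ∧ (∀ x, |g' x| ≤ M) ∧
        (∫ x, g' x ∂circleHaar = c) ∧
        α (fun x => (g' x : ℂ)) ≤ α (fun x => (g x : ℂ)) ∧
        ∫ x, (g' x - c) ^ 2 ∂circleHaar ≤ (∫ x, (g x - c) ^ 2 ∂circleHaar) / 2 := by
    intro g hm hb hint
    obtain ⟨θ, hθ⟩ := CircAux.exists_halving_rotation hm hb hint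
    have hmθ : Measurable (fun x => g (θ + x)) := hm.comp (measurable_const_add θ)
    refine ⟨fun x => (g x + g (θ + x)) / 2, (hm.add hmθ).div_const 2, ?_, ?_, ?_, hθ⟩
    · intro x
      have h1 := abs_add_le (g x) (g (θ + x))
      have h2 : |(2:ℝ)| = 2 := by norm_num
      rw [abs_div, h2, div_le_iff₀ (by norm_num : (0:ℝ) < 2)]
      have := hb x
      have := hb (θ + x)
      linarith
    · have hgθint : Integrable (fun x => g (θ + x)) circleHaar :=
        CircAux.integrable_of_bound hmθ (fun x => hb (θ + x))
      have hgint : Integrable g circleHaar := CircAux.integrable_of_bound hm hb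
      rw [integral_div, integral_add hgint hgθint, integral_add_left_eq_self g θ, hint]
      ring
    · have hrepr : (fun x => (((g x + g (θ + x)) / 2 : ℝ) : ℂ))
          = (1/2 : ℂ) • ((fun x => (g x : ℂ)) + fun x => (g (θ + x) : ℂ)) := by
        funext x
        simp only [Pi.smul_apply, Pi.add_apply, smul_eq_mul]
        push_cast
        ring
      rw [hrepr, hgauge.smul_eq]
      have hle := hgauge.add_le (fun x => (g x : ℂ)) (fun x => (g (θ + x) : ℂ))
        (memTop g M hm hb) (memTop (fun x => g (θ + x)) M hmθ (fun x => hb (θ + x)))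
      have hrot' : α (fun x => (g (θ + x) : ℂ)) = α (fun x => (g x : ℂ)) :=
        hrot θ (fun y => (g y : ℂ))
      have hnorm : ‖(1/2 : ℂ)‖ = 1/2 := by norm_num
      rw [hnorm]
      rw [hrot'] at hle
      linarith
  -- the iterated sequence
  set V₀ : ℝ := ∫ x, (g₀ x - c) ^ 2 ∂circleHaar with hV₀def
  have hV₀0 : 0 ≤ V₀ := integral_nonneg fun x => sq_nonneg _
  have seq : ∀ k : ℕ, ∃ g : Circle𝕋 → ℝ, Measurable g ∧ (∀ x, |g x| ≤ M) ∧
      (∫ x, g x ∂circleHaar = c) ∧ α (fun x => (g x : ℂ)) ≤ α f ∧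
      ∫ x, (g x - c) ^ 2 ∂circleHaar ≤ V₀ / 2 ^ k := by
    intro k
    induction k with
    | zero => exact ⟨g₀, hg₀m, hg₀b, rfl, hαg₀.le, by simp [hV₀def]⟩
    | succ k ih =>
      obtain ⟨g, h1, h2, h3, h4, h5⟩ := ih
      obtain ⟨g', h1', h2', h3', h4', h5'⟩ := step g h1 h2 h3
      refine ⟨g', h1', h2', h3', h4'.trans h4, ?_⟩
      have he : V₀ / 2 ^ (k + 1) = (V₀ / 2 ^ k) / 2 := by
        rw [pow_succ]; ring
      rw [he]
      have := h5'
      linarith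
  -- the ε-argument
  refine le_of_forall_pos_le_add fun ε hε => ?_
  set ε₁ : ℝ := ε / 2 with hε₁def
  have hε₁ : 0 < ε₁ := by positivity
  set K : ℝ := M + |c| + 1 with hKdef
  have hK : 0 < K := by positivity
  obtain ⟨δ, hδ0, hδ⟩ := hcont (ε₁ / K) (by positivity)
  have hpos : 0 < ε₁ ^ 2 * δ := by positivity
  obtain ⟨k, hk⟩ : ∃ k : ℕ, V₀ / 2 ^ k < ε₁ ^ 2 * δ := by
    obtain ⟨k, hk⟩ := pow_unbounded_of_one_lt (y := (2:ℝ)) (V₀ / (ε₁ ^ 2 * δ)) one_lt_two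
    refine ⟨k, ?_⟩
    have h2k : (0:ℝ) < 2 ^ k := by positivity
    rw [div_lt_iff₀ hpos] at hk
    rw [div_lt_iff₀ h2k]
    linarith [hk, mul_comm ((ε₁:ℝ) ^ 2 * δ) ((2:ℝ) ^ k)]
  obtain ⟨g, hm, hb, hint, hαg, hvar⟩ := seq k
  have hvar' : ∫ x, (g x - c) ^ 2 ∂circleHaar < ε₁ ^ 2 * δ := lt_of_le_of_lt hvar hk
  set E : Set Circle𝕋 := {x | ε₁ < |g x - c|} with hEdef
  have hEm : MeasurableSet E := measurableSet_lt measurable_const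
    ((hm.sub measurable_const).abs)
  have hu2_int : Integrable (fun x => (g x - c) ^ 2) circleHaar := by
    apply CircAux.integrable_of_bound ((hm.sub measurable_const).pow_const 2)
      (B := (M + |c|) * (M + |c|))
    intro x
    have h1 : |g x - c| ≤ M + |c| := (abs_sub (g x) c).trans (add_le_add_left (hb x) _)
    calc |(g x - c) ^ 2| = |g x - c| * |g x - c| := by rw [sq, abs_mul]
      _ ≤ (M + |c|) * (M + |c|) := mul_le_mul h1 h1 (abs_nonneg _)
          ((abs_nonneg _).trans h1)
  -- Chebyshev: the measure of E is small
  have hcheb : (circleHaar E).toReal * ε₁ ^ 2 ≤ ∫ x, (g x - c) ^ 2 ∂circleHaar := by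
    have h1 : ∫ _ in E, ε₁ ^ 2 ∂circleHaar ≤ ∫ x in E, (g x - c) ^ 2 ∂circleHaar := by
      apply setIntegral_mono_on (integrableOn_const (measure_ne_top _ _))
        hu2_int.integrableOn hEm
      intro x hx
      have hx' : ε₁ ≤ |g x - c| := le_of_lt hx
      calc ε₁ ^ 2 ≤ |g x - c| ^ 2 := pow_le_pow_left₀ hε₁.le hx' 2
        _ = (g x - c) ^ 2 := sq_abs _
    have h2 : ∫ x in E, (g x - c) ^ 2 ∂circleHaar ≤ ∫ x, (g x - c) ^ 2 ∂circleHaar :=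
      setIntegral_le_integral hu2_int (Filter.Eventually.of_forall fun x => sq_nonneg _)
    rw [setIntegral_const, smul_eq_mul, measureReal_def] at h1
    linarith
  have hmeas : circleHaar E < ENNReal.ofReal δ := by
    have hne : circleHaar E ≠ ⊤ := measure_ne_top _ _
    rw [ENNReal.lt_ofReal_iff_toReal_lt hne]
    have hsq : (0:ℝ) < ε₁ ^ 2 := by positivity
    have h3 : (circleHaar E).toReal * ε₁ ^ 2 < ε₁ ^ 2 * δ := lt_of_le_of_lt hcheb hvar'
    nlinarith [ENNReal.toReal_nonneg (a := circleHaar E)]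
  have hαχ : α (Set.indicator E fun _ => (1:ℂ)) < ε₁ / K := hδ E hEm hmeas
  have hαχ0 : 0 ≤ α (Set.indicator E fun _ => (1:ℂ)) := hgauge.nonneg _
  -- domination of the deviation
  set D : Circle𝕋 → ℂ := fun x => ((c - g x : ℝ) : ℂ) with hDdef
  set h : Circle𝕋 → ℝ := fun x => ε₁ + K * E.indicator (fun _ => (1:ℝ)) x with hhdef
  have hDb : ∀ x, ‖D x‖ ≤ h x := by
    intro x
    rw [hDdef]
    simp only [Complex.norm_real, Real.norm_eq_abs]
    by_cases hx : x ∈ E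
    · have h1 : |c - g x| ≤ |c| + M := by
        have := (abs_sub c (g x)).trans (add_le_add_right (hb x) _)
        exact this
      have h2 : h x = ε₁ + K := by simp [hhdef, Set.indicator_of_mem hx]
      rw [h2, hKdef]
      linarith [hε₁.le]
    · have h2 : h x = ε₁ := by simp [hhdef, Set.indicator_of_notMem hx]
      rw [h2]
      rw [abs_sub_comm]
      exact le_of_not_gt hx
  have hmemD : MemLp D ⊤ circleHaar := by
    have : Measurable (fun x => c - g x) := measurable_const.sub hm
    exact memTop (fun x => c - g x) (|c| + M) this
      (fun x => (abs_sub c (g x)).trans (add_le_add_right (hb x) _))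
  have hmemh : MemLp (fun x => (h x : ℂ)) ⊤ circleHaar := by
    have hhm : Measurable h := measurable_const.add
      (measurable_const.mul (measurable_const.indicator hEm))
    apply memTop h (ε₁ + K) hhm
    intro x
    rw [hhdef]
    simp only []
    by_cases hx : x ∈ E
    · rw [Set.indicator_of_mem hx]
      rw [abs_of_nonneg (by nlinarith [hε₁.le, hK.le])]
      linarith
    · rw [Set.indicator_of_notMem hx]
      rw [mul_zero, add_zero, abs_of_nonneg hε₁.le]
      linarith [hK.le]
  have hαD : α D ≤ α (fun x => (h x : ℂ)) :=
    GaugeAux.gauge_mono hgauge hmemD hmemh (Filter.Eventually.of_forall hDb)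
  -- split h into constant plus indicator
  have hsplit2 : (fun x => ((h x : ℝ) : ℂ))
      = (fun _ => (ε₁ : ℂ)) + (K : ℂ) • Set.indicator E (fun _ => (1:ℂ)) := by
    funext x
    simp only [Pi.add_apply, Pi.smul_apply, smul_eq_mul, hhdef]
    by_cases hx : x ∈ E
    · rw [Set.indicator_of_mem hx, Set.indicator_of_mem hx]
      push_cast
      ring
    · rw [Set.indicator_of_notMem hx, Set.indicator_of_notMem hx]
      push_cast
      ring
  have hmemχ : MemLp (Set.indicator E fun _ => (1:ℂ)) ⊤ circleHaar := by
    apply memLp_top_of_bound ((measurable_const.indicator hEm).aestronglyMeasurable) 1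
    apply Filter.Eventually.of_forall
    intro x
    by_cases hx : x ∈ E
    · rw [Set.indicator_of_mem hx]; simp
    · rw [Set.indicator_of_notMem hx]; simp
  have hαh : α (fun x => (h x : ℂ)) ≤ ε₁ + K * α (Set.indicator E fun _ => (1:ℂ)) := by
    rw [hsplit2]
    refine (hgauge.add_le _ _ (memLp_const _) (hmemχ.const_smul _)).trans ?_
    rw [hgauge.smul_eq, GaugeAux.gauge_const hgauge hε₁.le]
    have : ‖(K : ℂ)‖ = K := by
      rw [Complex.norm_real, Real.norm_eq_abs, abs_of_nonneg hK.le]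
    rw [this]
  -- final chain
  have hconst : α (fun _ : Circle𝕋 => (c : ℂ)) = c := GaugeAux.gauge_const hgauge hc0
  have hdecomp : (fun _ : Circle𝕋 => (c : ℂ)) = (fun x => (g x : ℂ)) + D := by
    funext x
    simp only [Pi.add_apply, hDdef]
    push_cast
    ring
  have hKχ : K * α (Set.indicator E fun _ => (1:ℂ)) < ε₁ := by
    have h1 : K * α (Set.indicator E fun _ => (1:ℂ)) < K * (ε₁ / K) :=
      (mul_lt_mul_iff_right₀ hK).2 hαχ
    rwa [mul_div_cancel₀ _ hK.ne'] at h1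
  calc c = α (fun _ : Circle𝕋 => (c : ℂ)) := hconst.symm
    _ ≤ α (fun x => (g x : ℂ)) + α D := by
        rw [hdecomp]; exact hgauge.add_le _ _ (memTop g M hm hb) hmemD
    _ ≤ α f + (ε₁ + K * α (Set.indicator E fun _ => (1:ℂ))) :=
        add_le_add hαg (hαD.trans hαh)
    _ ≤ α f + ε := by
        rw [hε₁def] at hKχ ⊢
        linarith
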